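/- arXiv:1007.1207 — 2 statements merged into one kernel-verified Lean document; each statement's English description precedes it below -/
import Mathlib

section
/- In the group algebra ℤ[S_n] (n ≥ 2), the product Φ_1 Φ_2 ⋯ Φ_{n-1} equals the sum of all elements of S_n, where Φ_j = 1 + ∑_{i=1}^{j} t_{i,j+1}. -/
/-- The symmetric group `S_n`, realized as the permutations of `ℕ` fixing every
point outside the letters `{1, …, n}`. -/
def SsetN (n : ℕ) : Set (Equiv.Perm ℕ) := {w | ∀ x : ℕ, ¬(1 ≤ x ∧ x ≤ n) → w x = x}

/-- `Φ_j = 1 + ∑_{i=1}^{j} t_{i, j+1} ∈ ℤ[S_n]`, where `t_{ij} = (i j)`. -/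
noncomputable def phiA (j : ℕ) : MonoidAlgebra ℤ (Equiv.Perm ℕ) :=
  1 + ∑ i ∈ Finset.Icc 1 j, MonoidAlgebra.of ℤ (Equiv.Perm ℕ) (Equiv.swap i (j + 1))

lemma ssetN_finite (n : ℕ) : (SsetN n).Finite := by
  have hmaps : ∀ w ∈ SsetN n, ∀ x ∈ Set.Icc 1 n, w x ∈ Set.Icc 1 n := by
    intro w hw x hx
    by_contra hnx
    have h1 : w (w x) = w x := hw (w x) (fun hc => hnx (Set.mem_Icc.mpr hc))
    have hx' : w x = x := w.injective h1
    exact hnx (by rwa [hx'])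
  rw [← Set.finite_coe_iff]
  have hIcc : Finite (Set.Icc (1:ℕ) n) := (Set.finite_Icc 1 n).to_subtype
  let F : SsetN n → (Set.Icc (1:ℕ) n → Set.Icc (1:ℕ) n) :=
    fun w x => ⟨w.1 x.1, hmaps w.1 w.2 x.1 x.2⟩
  have hinj : Function.Injective F := by
    intro w₁ w₂ h
    apply Subtype.ext
    apply Equiv.ext
    intro x
    by_cases hx : x ∈ Set.Icc (1:ℕ) n
    · exact congrArg Subtype.val (congrFun h ⟨x, hx⟩)
    · rw [w₁.2 x (by simpa [Set.mem_Icc] using hx), w₂.2 x (by simpa [Set.mem_Icc] using hx)]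
  exact Finite.of_injective F hinj

lemma ssetN_one : SsetN 1 = {1} := by
  ext w
  constructor
  · intro hw
    have h1 : w 1 = 1 := by
      by_contra h
      have : w (w 1) = w 1 := hw (w 1) (by omega)
      have := w.injective this
      exact h this
    apply Set.mem_singleton_iff.mpr
    apply Equiv.ext
    intro x
    by_cases hx : x = 1
    · simpa [hx] using h1
    · simpa using hw x (by omega)
  · rintro rfl
    intro x hx
    rfl

lemma swap_mem_step {k : ℕ} {u : Equiv.Perm ℕ} (hu : u ∈ SsetN k) {i : ℕ}
    (hi : i ∈ Finset.Icc 1 (k + 1)) : u * Equiv.swap i (k + 1) ∈ SsetN (k + 1) := by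
  intro x hx
  simp only [Finset.mem_Icc] at hi
  have hs : Equiv.swap i (k + 1) x = x :=
    Equiv.swap_apply_of_ne_of_ne (by omega) (by omega)
  have : u x = x := hu x (by omega)
  simp [Equiv.Perm.mul_apply, hs, this]

lemma inv_mem_step {k : ℕ} {w : Equiv.Perm ℕ} (hw : w ∈ SsetN (k + 1)) :
    w⁻¹ (k + 1) ∈ Finset.Icc 1 (k + 1) := by
  by_contra h
  simp only [Finset.mem_Icc] at h
  have h1 : w (w⁻¹ (k + 1)) = w⁻¹ (k + 1) := hw _ (by omega)
  have h2 : w (w⁻¹ (k + 1)) = k + 1 := w.apply_symm_apply _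
  omega

lemma mul_swap_mem_step {k : ℕ} {w : Equiv.Perm ℕ} (hw : w ∈ SsetN (k + 1)) :
    w * Equiv.swap (w⁻¹ (k + 1)) (k + 1) ∈ SsetN k := by
  intro x hx
  have hinv := inv_mem_step hw
  simp only [Finset.mem_Icc] at hinv
  by_cases hx1 : x = k + 1
  · subst hx1
    simp [Equiv.Perm.mul_apply, Equiv.swap_apply_right]
  · have hs : Equiv.swap (w⁻¹ (k + 1)) (k + 1) x = x := by
      apply Equiv.swap_apply_of_ne_of_ne
      · intro h
        have hfix : w x = x := hw x (by omega)
        have h2 : w x = k + 1 := by rw [h]; exact w.apply_symm_apply _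
        omega
      · exact hx1
    have : w x = x := hw x (by omega)
    rw [Equiv.Perm.mul_apply, hs, this]

lemma u_apply_top {k : ℕ} {u : Equiv.Perm ℕ} (hu : u ∈ SsetN k) : u⁻¹ (k + 1) = k + 1 := by
  have h : u (k + 1) = k + 1 := hu (k + 1) (by omega)
  exact u.injective (by rw [show u (u⁻¹ (k + 1)) = k + 1 from u.apply_symm_apply _, h])

/-- The key coset-decomposition step. -/
lemma step_sum (k : ℕ) :
    ∑ w ∈ (ssetN_finite (k + 1)).toFinset, MonoidAlgebra.of ℤ (Equiv.Perm ℕ) w =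
      (∑ u ∈ (ssetN_finite k).toFinset, MonoidAlgebra.of ℤ (Equiv.Perm ℕ) u) * phiA k := by
  rw [Finset.sum_mul]
  have hterm : ∀ u : Equiv.Perm ℕ, MonoidAlgebra.of ℤ (Equiv.Perm ℕ) u * phiA k
      = ∑ i ∈ Finset.Icc 1 (k + 1),
          MonoidAlgebra.of ℤ (Equiv.Perm ℕ) (u * Equiv.swap i (k + 1)) := by
    intro u
    rw [Finset.sum_Icc_succ_top (Nat.le_add_left 1 k), phiA, mul_add, mul_one, Finset.mul_sum]
    simp [map_mul, Equiv.swap_self, Equiv.Perm.mul_refl, add_comm]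
  simp only [hterm]
  rw [Finset.sum_sigma']
  refine Finset.sum_bij' (fun w _ => ⟨w * Equiv.swap (w⁻¹ (k + 1)) (k + 1), w⁻¹ (k + 1)⟩)
    (fun p _ => p.1 * Equiv.swap p.2 (k + 1)) ?_ ?_ ?_ ?_ ?_
  · intro w hw
    rw [Set.Finite.mem_toFinset] at hw
    refine Finset.mem_sigma.mpr ⟨?_, inv_mem_step hw⟩
    rw [Set.Finite.mem_toFinset]
    exact mul_swap_mem_step hw
  · intro p hp
    rw [Finset.mem_sigma, Set.Finite.mem_toFinset] at hp
    rw [Set.Finite.mem_toFinset]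
    exact swap_mem_step hp.1 hp.2
  · intro w hw
    simp [Equiv.swap_mul_self, mul_assoc]
  · intro p hp
    rw [Finset.mem_sigma, Set.Finite.mem_toFinset] at hp
    obtain ⟨hu, hi⟩ := hp
    have hu' : p.1.symm (k + 1) = k + 1 := u_apply_top hu
    ext : 1 <;>
      simp [u_apply_top hu, hu', Equiv.swap_apply_right, Equiv.swap_mul_self, mul_assoc]
  · intro w hw
    congr 1
    simp [Equiv.swap_mul_self, mul_assoc]

lemma key (m : ℕ) :
    ((List.range m).map fun j => phiA (j + 1)).prod =
      ∑ w ∈ (ssetN_finite (m + 1)).toFinset, MonoidAlgebra.of ℤ (Equiv.Perm ℕ) w := by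
  induction m with
  | zero =>
    simp only [List.range_zero, List.map_nil, List.prod_nil]
    have : (ssetN_finite 1).toFinset = ({1} : Finset (Equiv.Perm ℕ)) := by
      ext w
      simp [Set.Finite.mem_toFinset, ssetN_one]
    rw [this, Finset.sum_singleton, map_one]
  | succ m ih =>
    rw [List.range_succ, List.map_append, List.prod_append, List.map_singleton,
      List.prod_singleton, ih, ← step_sum (m + 1)]

/-- In `ℤ[S_n]` (`n ≥ 2`), `Φ_1 Φ_2 ⋯ Φ_{n-1}` equals the sum of all elements of `S_n`. -/
theorem phi_factorization_A (n : ℕ) (hn : 2 ≤ n) :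
    ((List.range (n - 1)).map fun j => phiA (j + 1)).prod =
      ∑ᶠ w ∈ SsetN n, MonoidAlgebra.of ℤ (Equiv.Perm ℕ) w := by
  rw [finsum_mem_eq_finite_toFinset_sum _ (ssetN_finite n)]
  have h : n - 1 + 1 = n := by omega
  have := key (n - 1)
  rw [h] at this
  exact this
end

section
/- The joint generating function of type B inversion number and the statistic m_B over B_n is ∑_{w ∈ B_n} q^{inv_B(w)} t^{m_B(w)} = ∏_{i=1}^{n} (1 + t·[2i]_q − t), where [k]_q = 1 + q + ⋯ + q^{k-1}. -/
/-- `w` is a signed permutation in the hyperoctahedral group `B_n`. -/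
def IsSignedPerm (n : ℕ) (w : Equiv.Perm ℤ) : Prop :=
  (∀ x : ℤ, w (-x) = -w x) ∧ ∀ x : ℤ, (n : ℤ) < |x| → w x = x

/-- `N(w)`: the number of negative entries among `w(1), …, w(n)`. -/
noncomputable def NB (n : ℕ) (w : Equiv.Perm ℤ) : ℕ :=
  ((Finset.Icc (1 : ℤ) (n : ℤ)).filter fun i => w i < 0).card

/-- The type B inversion number:
`inv_B(w) = #{i<j : w(i)>w(j)} + #{i<j : -w(i)>w(j)} + N(w)` with `1 ≤ i < j ≤ n`. -/
noncomputable def invB (n : ℕ) (w : Equiv.Perm ℤ) : ℕ :=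
  ((Finset.Icc (1 : ℤ) (n : ℤ) ×ˢ Finset.Icc (1 : ℤ) (n : ℤ)).filter fun p =>
      p.1 < p.2 ∧ w p.2 < w p.1).card +
    ((Finset.Icc (1 : ℤ) (n : ℤ) ×ˢ Finset.Icc (1 : ℤ) (n : ℤ)).filter fun p =>
      p.1 < p.2 ∧ w p.2 < -w p.1).card + NB n w

/-- `m_B(w) = #{i : w(i) > |w(j)| for some j > i} + N(w)`, with `1 ≤ i, j ≤ n`. -/
noncomputable def mB (n : ℕ) (w : Equiv.Perm ℤ) : ℕ :=
  ((Finset.Icc (1 : ℤ) (n : ℤ)).filter fun i =>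
      ∃ j ∈ Finset.Icc (1 : ℤ) (n : ℤ), i < j ∧ |w j| < w i).card + NB n w

set_option maxHeartbeats 2000000 in
def cyc (m p : ℤ) : Equiv.Perm ℤ where
  toFun x := if 1 ≤ p ∧ p ≤ m then
      (if x = p then m else if x = -p then -m
       else if p < x ∧ x ≤ m then x - 1 else if -m ≤ x ∧ x < -p then x + 1 else x) else x
  invFun x := if 1 ≤ p ∧ p ≤ m then
      (if x = m then p else if x = -m then -p
       else if p ≤ x ∧ x < m then x + 1 else if -m < x ∧ x ≤ -p then x - 1 else x) else x
  left_inv := by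
    intro x; dsimp only
    by_cases h : 1 ≤ p ∧ p ≤ m
    · simp only [h, if_true]; split_ifs <;> omega
    · simp only [h, if_false]
  right_inv := by
    intro x; dsimp only
    by_cases h : 1 ≤ p ∧ p ≤ m
    · simp only [h, if_true]; split_ifs <;> omega
    · simp only [h, if_false]

lemma cyc_apply (m p x : ℤ) : cyc m p x = if 1 ≤ p ∧ p ≤ m then
      (if x = p then m else if x = -p then -m
       else if p < x ∧ x ≤ m then x - 1 else if -m ≤ x ∧ x < -p then x + 1 else x) else x := rfl

def rk (m k : ℤ) : Equiv.Perm ℤ := (if k < 0 then Equiv.swap m (-m) else 1) * cyc m |k|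

lemma swap_neg_apply (m x : ℤ) : Equiv.swap m (-m) (-x) = -(Equiv.swap m (-m) x) := by
  rcases eq_or_ne x m with rfl | h1
  · simp [Equiv.swap_apply_left, Equiv.swap_apply_right]
  · rcases eq_or_ne x (-m) with rfl | h2
    · simp [Equiv.swap_apply_left, Equiv.swap_apply_right]
    · rw [Equiv.swap_apply_of_ne_of_ne h1 h2, Equiv.swap_apply_of_ne_of_ne (by omega) (by omega)]

lemma rk_neg (m k x : ℤ) : rk m k (-x) = -(rk m k x) := by
  rcases lt_or_ge k 0 with h | h
  · simp only [rk, if_pos h, Equiv.Perm.mul_apply, cyc_apply]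
    rw [← swap_neg_apply]
    congr 1
    split_ifs <;> omega
  · simp only [rk, if_neg (not_lt.2 h), one_mul, cyc_apply]
    split_ifs <;> omega

lemma rk_far (m k x : ℤ) (hk : |k| ≤ m) (hx : m < |x|) : rk m k x = x := by
  obtain ⟨ha, ha'⟩ | ⟨ha, ha'⟩ := abs_cases k <;> obtain ⟨hb, hb'⟩ | ⟨hb, hb'⟩ := abs_cases x <;>
  · have h1 : cyc m |k| x = x := by rw [cyc_apply]; split_ifs <;> omega
    rcases lt_or_ge k 0 with h | h
    · simp only [rk, if_pos h, Equiv.Perm.mul_apply, h1]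
      rw [Equiv.swap_apply_of_ne_of_ne (by omega) (by omega)]
    · simp only [rk, if_neg (not_lt.2 h), one_mul, h1]

lemma rk_self (m k : ℤ) (hk1 : 1 ≤ |k|) (hk2 : |k| ≤ m) : rk m k k = m := by
  obtain ⟨ha, ha'⟩ | ⟨ha, ha'⟩ := abs_cases k
  · have h1 : cyc m |k| k = m := by rw [cyc_apply]; split_ifs <;> omega
    simp only [rk, if_neg (not_lt.2 ha'), one_mul, h1]
  · have h1 : cyc m |k| k = -m := by rw [cyc_apply]; split_ifs <;> omega
    simp only [rk, if_pos ha', Equiv.Perm.mul_apply, h1, Equiv.swap_apply_right]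

lemma rk_absk (m k : ℤ) (hk1 : 1 ≤ |k|) (hk2 : |k| ≤ m) :
    rk m k |k| = if k < 0 then -m else m := by
  obtain ⟨ha, ha'⟩ | ⟨ha, ha'⟩ := abs_cases k
  · rw [ha, rk_self m k hk1 hk2, if_neg (not_lt.2 ha')]
  · rw [show |k| = -k by omega, rk_neg, rk_self m k hk1 hk2, if_pos ha']

lemma rk_lt (m k x : ℤ) (hk2 : |k| ≤ m) (h1 : 0 ≤ x) (h2 : x < |k|) : rk m k x = x := by
  obtain ⟨ha, ha'⟩ | ⟨ha, ha'⟩ := abs_cases k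
  all_goals
  have hc : cyc m |k| x = x := by rw [cyc_apply]; split_ifs <;> omega
  rcases lt_or_ge k 0 with h | h
  · simp only [rk, if_pos h, Equiv.Perm.mul_apply, hc]
    rw [Equiv.swap_apply_of_ne_of_ne (by omega) (by omega)]
  · simp only [rk, if_neg (not_lt.2 h), one_mul, hc]

lemma rk_gt (m k x : ℤ) (hk1 : 1 ≤ |k|) (h1 : |k| < x) (h2 : x ≤ m) : rk m k x = x - 1 := by
  obtain ⟨ha, ha'⟩ | ⟨ha, ha'⟩ := abs_cases k
  all_goals
  have hc : cyc m |k| x = x - 1 := by rw [cyc_apply]; split_ifs <;> omega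
  rcases lt_or_ge k 0 with h | h
  · simp only [rk, if_pos h, Equiv.Perm.mul_apply, hc]
    rw [Equiv.swap_apply_of_ne_of_ne (by omega) (by omega)]
  · simp only [rk, if_neg (not_lt.2 h), one_mul, hc]

section aux
variable {n : ℕ} {u w : Equiv.Perm ℤ} {k : ℤ}

lemma isp_zero (hu : IsSignedPerm n u) : u 0 = 0 := by
  have := hu.1 0; rw [neg_zero] at this; omega

lemma isp_bound (hu : IsSignedPerm n u) {x : ℤ} (hx : |x| ≤ n) : |u x| ≤ n := by
  by_contra h
  have h2 : u (u x) = u x := hu.2 (u x) (by omega)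
  have h3 : u x = x := u.injective h2
  exact h (by rw [h3]; exact hx)

lemma isp_top (hu : IsSignedPerm n u) : u ((n:ℤ)+1) = (n:ℤ)+1 :=
  hu.2 _ (by rw [abs_of_nonneg] <;> omega)

lemma isp_comp (hk1 : 1 ≤ |k|) (hk2 : |k| ≤ (n:ℤ)+1) (hu : IsSignedPerm n u) :
    IsSignedPerm (n+1) (u * rk ((n:ℤ)+1) k) := by
  constructor
  · intro x
    simp only [Equiv.Perm.mul_apply, rk_neg, hu.1]
  · intro x hx
    push_cast at hx
    simp only [Equiv.Perm.mul_apply]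
    rw [rk_far _ _ _ hk2 hx, hu.2 x (by omega)]

lemma comp_k (hk1 : 1 ≤ |k|) (hk2 : |k| ≤ (n:ℤ)+1) (hu : IsSignedPerm n u) :
    (u * rk ((n:ℤ)+1) k) k = (n:ℤ)+1 := by
  simp only [Equiv.Perm.mul_apply, rk_self _ _ hk1 hk2, isp_top hu]

lemma rk_inv_neg (m k x : ℤ) : (rk m k)⁻¹ (-x) = -((rk m k)⁻¹ x) := by
  apply (rk m k).injective
  rw [Equiv.Perm.coe_inv, Equiv.apply_symm_apply, rk_neg, Equiv.apply_symm_apply]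

lemma comp_inv_top (hk1 : 1 ≤ |k|) (hk2 : |k| ≤ (n:ℤ)+1) (hu : IsSignedPerm n u) :
    (u * rk ((n:ℤ)+1) k)⁻¹ ((n:ℤ)+1) = k := by
  apply (u * rk ((n:ℤ)+1) k).injective
  rw [Equiv.Perm.coe_inv, Equiv.apply_symm_apply, comp_k hk1 hk2 hu]

lemma decomp_k_ne (hw : IsSignedPerm (n+1) w) :
    1 ≤ |w⁻¹ ((n:ℤ)+1)| ∧ |w⁻¹ ((n:ℤ)+1)| ≤ (n:ℤ)+1 := by
  have hwk : w (w⁻¹ ((n:ℤ)+1)) = (n:ℤ)+1 := w.apply_symm_apply _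
  constructor
  · rcases abs_cases (w⁻¹ ((n:ℤ)+1)) with ⟨h1, h2⟩ | ⟨h1, h2⟩
    · rcases eq_or_ne (w⁻¹ ((n:ℤ)+1)) 0 with h | h
      · rw [h, isp_zero hw] at hwk; omega
      · omega
    · omega
  · by_contra h
    push_neg at h
    have h2 : w (w⁻¹ ((n:ℤ)+1)) = w⁻¹ ((n:ℤ)+1) := hw.2 _ (by push_cast; omega)
    rw [hwk] at h2
    rw [← h2, abs_of_nonneg (by omega)] at h
    omega

lemma isp_decomp (hw : IsSignedPerm (n+1) w) (hk1 : 1 ≤ |k|) (hk2 : |k| ≤ (n:ℤ)+1)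
    (hwk : w k = (n:ℤ)+1) : IsSignedPerm n (w * (rk ((n:ℤ)+1) k)⁻¹) := by
  have hodd : ∀ x, (w * (rk ((n:ℤ)+1) k)⁻¹) (-x) = -((w * (rk ((n:ℤ)+1) k)⁻¹) x) := by
    intro x; simp only [Equiv.Perm.mul_apply, rk_inv_neg, hw.1]
  refine ⟨hodd, fun x hx => ?_⟩
  push_cast at hx
  have htop : (w * (rk ((n:ℤ)+1) k)⁻¹) ((n:ℤ)+1) = (n:ℤ)+1 := by
    have h1 : rk ((n:ℤ)+1) k k = (n:ℤ)+1 := rk_self _ _ hk1 hk2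
    have h2 : (rk ((n:ℤ)+1) k)⁻¹ ((n:ℤ)+1) = k := by
      apply (rk ((n:ℤ)+1) k).injective
      rw [Equiv.Perm.coe_inv, Equiv.apply_symm_apply, h1]
    simp only [Equiv.Perm.mul_apply, h2, hwk]
  have hdisj : x = (n:ℤ)+1 ∨ x = -((n:ℤ)+1) ∨ ((n:ℤ)+1 < |x|) := by
    rcases abs_cases x with ⟨ha1, ha2⟩ | ⟨ha1, ha2⟩ <;> omega
  rcases hdisj with h | h | h
  · rw [h]; exact htop
  · rw [h, hodd, htop]
  · have h1 : rk ((n:ℤ)+1) k x = x := rk_far _ _ _ hk2 h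
    have h2 : (rk ((n:ℤ)+1) k)⁻¹ x = x := by
      conv_lhs => rw [← h1]
      rw [Equiv.Perm.coe_inv, Equiv.symm_apply_apply]
    simp only [Equiv.Perm.mul_apply, h2]
    exact hw.2 x (by push_cast; omega)

end aux

def uns (p x : ℤ) : ℤ := if x < p then x else x + 1

lemma uns_inj (p : ℤ) : Function.Injective (uns p) := by
  intro a b h; unfold uns at h; split_ifs at h <;> omega

lemma uns_lt_iff (p x y : ℤ) : uns p x < uns p y ↔ x < y := by
  unfold uns; split_ifs <;> omega

lemma uns_ne (p x : ℤ) : uns p x ≠ p := by unfold uns; split_ifs <;> omega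

lemma lt_uns_iff (p x : ℤ) : p < uns p x ↔ p ≤ x := by unfold uns; split_ifs <;> omega

lemma uns_lt_p_iff (p x : ℤ) : uns p x < p ↔ x < p := by unfold uns; split_ifs <;> omega

lemma uns_mem {n : ℕ} {p x : ℤ} (h1 : 1 ≤ p) (hx : x ∈ Finset.Icc (1:ℤ) (n:ℤ)) :
    uns p x ∈ Finset.Icc (1:ℤ) ((n:ℤ)+1) := by
  simp only [Finset.mem_Icc] at *
  unfold uns; split_ifs <;> omega

lemma uns_not_mem {n : ℕ} {p : ℤ} : p ∉ (Finset.Icc (1:ℤ) (n:ℤ)).image (uns p) := by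
  simp only [Finset.mem_image, Finset.mem_Icc]
  rintro ⟨y, -, hy⟩; exact uns_ne p y hy

lemma Icc_decomp {n : ℕ} {p : ℤ} (h1 : 1 ≤ p) (h2 : p ≤ (n:ℤ)+1) :
    Finset.Icc (1:ℤ) ((n:ℤ)+1) = insert p ((Finset.Icc (1:ℤ) (n:ℤ)).image (uns p)) := by
  ext x
  simp only [Finset.mem_insert, Finset.mem_image, Finset.mem_Icc, uns]
  constructor
  · intro hx
    rcases eq_or_ne x p with rfl | hne
    · exact Or.inl rfl
    · refine Or.inr ⟨if x < p then x else x - 1, by split_ifs <;> omega, ?_⟩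
      split_ifs <;> omega
  · intro hx
    rcases hx with rfl | ⟨y, hy, rfl⟩
    · omega
    · split_ifs <;> omega

lemma houter {n : ℕ} {p : ℤ} (h1 : 1 ≤ p) (h2 : p ≤ (n:ℤ)+1) (g : ℤ → ℕ) :
    ∑ i ∈ Finset.Icc (1:ℤ) ((n:ℤ)+1), g i
      = g p + ∑ x ∈ Finset.Icc (1:ℤ) (n:ℤ), g (uns p x) := by
  rw [Icc_decomp h1 h2, Finset.sum_insert uns_not_mem,
    Finset.sum_image fun a _ b _ h => uns_inj p h]

lemma filter_card_decomp {n : ℕ} {p : ℤ} (h1 : 1 ≤ p) (h2 : p ≤ (n:ℤ)+1)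
    (P : ℤ → Prop) [DecidablePred P] :
    ((Finset.Icc (1:ℤ) ((n:ℤ)+1)).filter P).card
      = (if P p then 1 else 0)
        + ((Finset.Icc (1:ℤ) (n:ℤ)).filter fun x => P (uns p x)).card := by
  rw [Finset.card_filter, Finset.card_filter, houter h1 h2]

lemma filter_card_decomp2 {n : ℕ} {p : ℤ} (h1 : 1 ≤ p) (h2 : p ≤ (n:ℤ)+1)
    (Q : ℤ → ℤ → Prop) [∀ i j, Decidable (Q i j)] :
    ((Finset.Icc (1:ℤ) ((n:ℤ)+1) ×ˢ Finset.Icc (1:ℤ) ((n:ℤ)+1)).filter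
        fun pr => Q pr.1 pr.2).card
      = (if Q p p then 1 else 0)
        + ((Finset.Icc (1:ℤ) (n:ℤ)).filter fun y => Q p (uns p y)).card
        + ((Finset.Icc (1:ℤ) (n:ℤ)).filter fun x => Q (uns p x) p).card
        + ((Finset.Icc (1:ℤ) (n:ℤ) ×ˢ Finset.Icc (1:ℤ) (n:ℤ)).filter
            fun pr => Q (uns p pr.1) (uns p pr.2)).card := by
  rw [Finset.card_filter, Finset.sum_product]
  rw [houter h1 h2 (fun i => ∑ j ∈ Finset.Icc (1:ℤ) ((n:ℤ)+1), if Q i j then 1 else 0)]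
  rw [houter h1 h2 (fun j => if Q p j then 1 else 0)]
  have : ∀ x : ℤ, (∑ j ∈ Finset.Icc (1:ℤ) ((n:ℤ)+1), if Q (uns p x) j then 1 else 0)
      = (if Q (uns p x) p then 1 else 0)
        + ∑ y ∈ Finset.Icc (1:ℤ) (n:ℤ), (if Q (uns p x) (uns p y) then 1 else 0) := by
    intro x; rw [houter h1 h2 (fun j => if Q (uns p x) j then 1 else 0)]
  simp only [this, Finset.sum_add_distrib]
  rw [Finset.card_filter, Finset.card_filter, Finset.card_filter, Finset.sum_product]
  dsimp only
  omega

section counts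
variable {n : ℕ} {u : Equiv.Perm ℤ} {k : ℤ}

lemma w_uns (hk1 : 1 ≤ |k|) (hk2 : |k| ≤ (n:ℤ)+1) (x : ℤ) (hx1 : 1 ≤ x) (hx2 : x ≤ (n:ℤ)) :
    (u * rk ((n:ℤ)+1) k) (uns |k| x) = u x := by
  simp only [Equiv.Perm.mul_apply, uns]
  split_ifs with h
  · rw [rk_lt _ _ _ hk2 (by omega) h]
  · rw [rk_gt _ _ _ hk1 (by omega) (by omega)]
    norm_num

lemma w_p (hk1 : 1 ≤ |k|) (hk2 : |k| ≤ (n:ℤ)+1) (hu : IsSignedPerm n u) :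
    (u * rk ((n:ℤ)+1) k) |k| = (if k < 0 then -((n:ℤ)+1) else (n:ℤ)+1) := by
  simp only [Equiv.Perm.mul_apply, rk_absk _ _ hk1 hk2]
  split_ifs
  · rw [hu.1, isp_top hu]
  · exact isp_top hu

lemma u_bound (hu : IsSignedPerm n u) (x : ℤ) (hx1 : 1 ≤ x) (hx2 : x ≤ (n:ℤ)) :
    |u x| ≤ (n:ℤ) := isp_bound hu (by rw [abs_of_nonneg] <;> omega)

lemma NB_comp (hk1 : 1 ≤ |k|) (hk2 : |k| ≤ (n:ℤ)+1) (hu : IsSignedPerm n u) :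
    NB (n+1) (u * rk ((n:ℤ)+1) k) = NB n u + (if k < 0 then 1 else 0) := by
  unfold NB
  simp only [Nat.cast_add, Nat.cast_one]
  rw [filter_card_decomp hk1 hk2]
  have h1 : ((u * rk ((n:ℤ)+1) k) |k| < 0) ↔ (k < 0) := by
    rw [w_p hk1 hk2 hu]; split_ifs with h <;> constructor <;> intro h2 <;> omega
  have h2 : ((Finset.Icc (1:ℤ) (n:ℤ)).filter fun x => (u * rk ((n:ℤ)+1) k) (uns |k| x) < 0)
      = (Finset.Icc (1:ℤ) (n:ℤ)).filter (fun x => u x < 0) := by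
    apply Finset.filter_congr
    intro x hx
    simp only [Finset.mem_Icc] at hx
    rw [w_uns hk1 hk2 x hx.1 hx.2]
  rw [h2, if_congr h1 rfl rfl]
  omega

lemma A_comp (hk1 : 1 ≤ |k|) (hk2 : |k| ≤ (n:ℤ)+1) (hu : IsSignedPerm n u) :
    ((Finset.Icc (1:ℤ) ((n:ℤ)+1) ×ˢ Finset.Icc (1:ℤ) ((n:ℤ)+1)).filter fun pr =>
        pr.1 < pr.2 ∧ (u * rk ((n:ℤ)+1) k) pr.2 < (u * rk ((n:ℤ)+1) k) pr.1).card
      = ((Finset.Icc (1:ℤ) (n:ℤ) ×ˢ Finset.Icc (1:ℤ) (n:ℤ)).filter fun pr =>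
          pr.1 < pr.2 ∧ u pr.2 < u pr.1).card
        + (if k < 0 then (|k|-1).toNat else ((n:ℤ)+1-|k|).toNat) := by
  have hd := filter_card_decomp2 (n := n) hk1 hk2
    (fun i j => i < j ∧ (u * rk ((n:ℤ)+1) k) j < (u * rk ((n:ℤ)+1) k) i)
  rw [hd]
  rw [if_neg (by simp)]
  have h4 : ((Finset.Icc (1:ℤ) (n:ℤ) ×ˢ Finset.Icc (1:ℤ) (n:ℤ)).filter
      fun pr => uns |k| pr.1 < uns |k| pr.2
        ∧ (u * rk ((n:ℤ)+1) k) (uns |k| pr.2) < (u * rk ((n:ℤ)+1) k) (uns |k| pr.1))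
      = ((Finset.Icc (1:ℤ) (n:ℤ) ×ˢ Finset.Icc (1:ℤ) (n:ℤ)).filter fun pr =>
          pr.1 < pr.2 ∧ u pr.2 < u pr.1) := by
    apply Finset.filter_congr
    rintro ⟨a, b⟩ hab
    simp only [Finset.mem_product, Finset.mem_Icc] at hab
    rw [uns_lt_iff, w_uns hk1 hk2 a hab.1.1 hab.1.2, w_uns hk1 hk2 b hab.2.1 hab.2.2]
  rw [h4]
  rcases lt_or_ge k 0 with hk | hk
  · have h2 : ((Finset.Icc (1:ℤ) (n:ℤ)).filter fun y => |k| < uns |k| y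
        ∧ (u * rk ((n:ℤ)+1) k) (uns |k| y) < (u * rk ((n:ℤ)+1) k) |k|) = ∅ := by
      apply Finset.filter_false_of_mem
      intro y hy
      simp only [Finset.mem_Icc] at hy
      rw [w_uns hk1 hk2 y hy.1 hy.2, w_p hk1 hk2 hu, if_pos hk]
      have := (abs_le.1 (u_bound hu y hy.1 hy.2)).1
      rintro ⟨-, h⟩
      omega
    have h3 : ((Finset.Icc (1:ℤ) (n:ℤ)).filter fun x => uns |k| x < |k|
        ∧ (u * rk ((n:ℤ)+1) k) |k| < (u * rk ((n:ℤ)+1) k) (uns |k| x))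
        = Finset.Icc (1:ℤ) (|k|-1) := by
      ext x
      simp only [Finset.mem_filter, Finset.mem_Icc]
      constructor
      · rintro ⟨⟨hx1, hx2⟩, hlt, -⟩
        rw [uns_lt_p_iff] at hlt
        omega
      · rintro ⟨hx1, hx2⟩
        have hxn : x ≤ (n:ℤ) := by omega
        have := (abs_le.1 (u_bound hu x hx1 hxn)).1
        rw [uns_lt_p_iff, w_uns hk1 hk2 x hx1 hxn, w_p hk1 hk2 hu, if_pos hk]
        refine ⟨⟨hx1, hxn⟩, by omega, by omega⟩
    rw [h2, h3, if_pos hk, Int.card_Icc]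
    simp only [Finset.card_empty]
    omega
  · have h2 : ((Finset.Icc (1:ℤ) (n:ℤ)).filter fun y => |k| < uns |k| y
        ∧ (u * rk ((n:ℤ)+1) k) (uns |k| y) < (u * rk ((n:ℤ)+1) k) |k|)
        = Finset.Icc |k| (n:ℤ) := by
      ext y
      simp only [Finset.mem_filter, Finset.mem_Icc]
      constructor
      · rintro ⟨⟨hy1, hy2⟩, hlt, -⟩
        rw [lt_uns_iff] at hlt
        omega
      · rintro ⟨hy1, hy2⟩
        have hy0 : 1 ≤ y := by omega
        have := (abs_le.1 (u_bound hu y hy0 hy2)).2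
        rw [lt_uns_iff, w_uns hk1 hk2 y hy0 hy2, w_p hk1 hk2 hu, if_neg (by omega)]
        refine ⟨⟨hy0, hy2⟩, by omega, by omega⟩
    have h3 : ((Finset.Icc (1:ℤ) (n:ℤ)).filter fun x => uns |k| x < |k|
        ∧ (u * rk ((n:ℤ)+1) k) |k| < (u * rk ((n:ℤ)+1) k) (uns |k| x)) = ∅ := by
      apply Finset.filter_false_of_mem
      intro x hx
      simp only [Finset.mem_Icc] at hx
      rw [w_uns hk1 hk2 x hx.1 hx.2, w_p hk1 hk2 hu, if_neg (by omega)]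
      have := (abs_le.1 (u_bound hu x hx.1 hx.2)).2
      rintro ⟨-, h⟩
      omega
    rw [h2, h3, if_neg (by omega), Int.card_Icc]
    simp only [Finset.card_empty]
    omega

lemma B_comp (hk1 : 1 ≤ |k|) (hk2 : |k| ≤ (n:ℤ)+1) (hu : IsSignedPerm n u) :
    ((Finset.Icc (1:ℤ) ((n:ℤ)+1) ×ˢ Finset.Icc (1:ℤ) ((n:ℤ)+1)).filter fun pr =>
        pr.1 < pr.2 ∧ (u * rk ((n:ℤ)+1) k) pr.2 < -(u * rk ((n:ℤ)+1) k) pr.1).card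
      = ((Finset.Icc (1:ℤ) (n:ℤ) ×ˢ Finset.Icc (1:ℤ) (n:ℤ)).filter fun pr =>
          pr.1 < pr.2 ∧ u pr.2 < -u pr.1).card
        + (if k < 0 then (n:ℕ) else 0) := by
  have hd := filter_card_decomp2 (n := n) hk1 hk2
    (fun i j => i < j ∧ (u * rk ((n:ℤ)+1) k) j < -(u * rk ((n:ℤ)+1) k) i)
  rw [hd]
  rw [if_neg (by simp)]
  have h4 : ((Finset.Icc (1:ℤ) (n:ℤ) ×ˢ Finset.Icc (1:ℤ) (n:ℤ)).filter
      fun pr => uns |k| pr.1 < uns |k| pr.2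
        ∧ (u * rk ((n:ℤ)+1) k) (uns |k| pr.2) < -(u * rk ((n:ℤ)+1) k) (uns |k| pr.1))
      = ((Finset.Icc (1:ℤ) (n:ℤ) ×ˢ Finset.Icc (1:ℤ) (n:ℤ)).filter fun pr =>
          pr.1 < pr.2 ∧ u pr.2 < -u pr.1) := by
    apply Finset.filter_congr
    rintro ⟨a, b⟩ hab
    simp only [Finset.mem_product, Finset.mem_Icc] at hab
    rw [uns_lt_iff, w_uns hk1 hk2 a hab.1.1 hab.1.2, w_uns hk1 hk2 b hab.2.1 hab.2.2]
  rw [h4]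
  rcases lt_or_ge k 0 with hk | hk
  · have h2 : ((Finset.Icc (1:ℤ) (n:ℤ)).filter fun y => |k| < uns |k| y
        ∧ (u * rk ((n:ℤ)+1) k) (uns |k| y) < -(u * rk ((n:ℤ)+1) k) |k|)
        = Finset.Icc |k| (n:ℤ) := by
      ext y
      simp only [Finset.mem_filter, Finset.mem_Icc]
      constructor
      · rintro ⟨⟨hy1, hy2⟩, hlt, -⟩
        rw [lt_uns_iff] at hlt
        omega
      · rintro ⟨hy1, hy2⟩
        have hy0 : 1 ≤ y := by omega
        have := (abs_le.1 (u_bound hu y hy0 hy2)).2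
        rw [lt_uns_iff, w_uns hk1 hk2 y hy0 hy2, w_p hk1 hk2 hu, if_pos hk]
        refine ⟨⟨hy0, hy2⟩, by omega, by omega⟩
    have h3 : ((Finset.Icc (1:ℤ) (n:ℤ)).filter fun x => uns |k| x < |k|
        ∧ (u * rk ((n:ℤ)+1) k) |k| < -(u * rk ((n:ℤ)+1) k) (uns |k| x))
        = Finset.Icc (1:ℤ) (|k|-1) := by
      ext x
      simp only [Finset.mem_filter, Finset.mem_Icc]
      constructor
      · rintro ⟨⟨hx1, hx2⟩, hlt, -⟩
        rw [uns_lt_p_iff] at hlt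
        omega
      · rintro ⟨hx1, hx2⟩
        have hxn : x ≤ (n:ℤ) := by omega
        have := (abs_le.1 (u_bound hu x hx1 hxn)).2
        rw [uns_lt_p_iff, w_uns hk1 hk2 x hx1 hxn, w_p hk1 hk2 hu, if_pos hk]
        refine ⟨⟨hx1, hxn⟩, by omega, by omega⟩
    rw [h2, h3, if_pos hk, Int.card_Icc, Int.card_Icc]
    omega
  · have h2 : ((Finset.Icc (1:ℤ) (n:ℤ)).filter fun y => |k| < uns |k| y
        ∧ (u * rk ((n:ℤ)+1) k) (uns |k| y) < -(u * rk ((n:ℤ)+1) k) |k|) = ∅ := by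
      apply Finset.filter_false_of_mem
      intro y hy
      simp only [Finset.mem_Icc] at hy
      rw [w_uns hk1 hk2 y hy.1 hy.2, w_p hk1 hk2 hu, if_neg (by omega)]
      have := (abs_le.1 (u_bound hu y hy.1 hy.2)).1
      rintro ⟨-, h⟩
      omega
    have h3 : ((Finset.Icc (1:ℤ) (n:ℤ)).filter fun x => uns |k| x < |k|
        ∧ (u * rk ((n:ℤ)+1) k) |k| < -(u * rk ((n:ℤ)+1) k) (uns |k| x)) = ∅ := by
      apply Finset.filter_false_of_mem
      intro x hx
      simp only [Finset.mem_Icc] at hx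
      rw [w_uns hk1 hk2 x hx.1 hx.2, w_p hk1 hk2 hu, if_neg (by omega)]
      have := (abs_le.1 (u_bound hu x hx.1 hx.2)).1
      rintro ⟨-, h⟩
      omega
    rw [h2, h3, if_neg (by omega)]
    simp only [Finset.card_empty]
    omega

lemma card_filter_congr {s : Finset ℤ} {p q : ℤ → Prop} [DecidablePred p] [DecidablePred q]
    (H : ∀ x ∈ s, p x ↔ q x) : (s.filter p).card = (s.filter q).card := by
  rw [Finset.filter_congr H]

lemma mB_comp (hk1 : 1 ≤ |k|) (hk2 : |k| ≤ (n:ℤ)+1) (hu : IsSignedPerm n u) :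
    mB (n+1) (u * rk ((n:ℤ)+1) k) = mB n u + (if k = (n:ℤ)+1 then 0 else 1) := by
  unfold mB
  simp only [Nat.cast_add, Nat.cast_one]
  have hd := @filter_card_decomp n |k| hk1 hk2
    (fun i => ∃ j ∈ Finset.Icc (1:ℤ) ((n:ℤ)+1), i < j
      ∧ |(u * rk ((n:ℤ)+1) k) j| < (u * rk ((n:ℤ)+1) k) i)
    (fun _ => Finset.decidableExistsAndFinset)
  rw [hd]
  have habsp : |(u * rk ((n:ℤ)+1) k) (|k|)| = (n:ℤ)+1 := by
    rw [w_p hk1 hk2 hu]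
    split_ifs
    · rw [abs_of_nonpos (by omega)]; omega
    · rw [abs_of_nonneg (by omega)]
  have h1 : (∃ j ∈ Finset.Icc (1:ℤ) ((n:ℤ)+1), |k| < j
      ∧ |(u * rk ((n:ℤ)+1) k) j| < (u * rk ((n:ℤ)+1) k) |k|) ↔ (0 ≤ k ∧ |k| ≤ (n:ℤ)) := by
    constructor
    · rintro ⟨j, hj, hlt, habs⟩
      simp only [Finset.mem_Icc] at hj
      rw [w_p hk1 hk2 hu] at habs
      split_ifs at habs with h
      · have := abs_nonneg ((u * rk ((n:ℤ)+1) k) j)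
        omega
      · exact ⟨by omega, by omega⟩
    · rintro ⟨hk0, hkn⟩
      refine ⟨uns |k| |k|, uns_mem hk1 (by simp only [Finset.mem_Icc]; omega), ?_, ?_⟩
      · rw [lt_uns_iff]
      · rw [w_uns hk1 hk2 |k| hk1 hkn, w_p hk1 hk2 hu, if_neg (by omega)]
        have h0 := abs_le.1 (u_bound hu |k| hk1 hkn)
        rw [abs_lt]
        constructor <;> omega
  have h2 : (@Finset.filter ℤ (fun x =>
      ∃ j ∈ Finset.Icc (1:ℤ) ((n:ℤ)+1), uns |k| x < j
        ∧ |(u * rk ((n:ℤ)+1) k) j| < (u * rk ((n:ℤ)+1) k) (uns |k| x))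
      (fun _ => Finset.decidableExistsAndFinset) (Finset.Icc (1:ℤ) (n:ℤ))).card
      = ((Finset.Icc (1:ℤ) (n:ℤ)).filter fun i =>
          ∃ j ∈ Finset.Icc (1:ℤ) (n:ℤ), i < j ∧ |u j| < u i).card := by
    apply card_filter_congr
    intro x hx
    simp only [Finset.mem_Icc] at hx
    rw [w_uns hk1 hk2 x hx.1 hx.2]
    constructor
    · rintro ⟨j, hj, hlt, habs⟩
      simp only [Finset.mem_Icc] at hj
      have hjp : j ≠ |k| := by
        intro h
        rw [h, habsp] at habs
        have := (abs_le.1 (u_bound hu x hx.1 hx.2)).2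
        omega
      refine ⟨if j < |k| then j else j - 1, ?_, ?_, ?_⟩
      · simp only [Finset.mem_Icc]
        split_ifs <;> omega
      · unfold uns at hlt
        split_ifs at hlt ⊢ <;> omega
      · have huj : uns |k| (if j < |k| then j else j - 1) = j := by
          unfold uns
          split_ifs <;> omega
        rw [← huj] at habs
        rw [w_uns hk1 hk2 _ (by split_ifs <;> omega) (by split_ifs <;> omega)] at habs
        exact habs
    · rintro ⟨y, hy, hlt, habs⟩
      simp only [Finset.mem_Icc] at hy
      refine ⟨uns |k| y, uns_mem hk1 (by simp only [Finset.mem_Icc]; omega), ?_, ?_⟩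
      · rw [uns_lt_iff]; exact hlt
      · rw [w_uns hk1 hk2 y hy.1 hy.2]; exact habs
  rw [h2, NB_comp hk1 hk2 hu]
  simp only [h1]
  obtain ⟨ha, ha'⟩ | ⟨ha, ha'⟩ := abs_cases k
  all_goals split_ifs <;> omega

lemma invB_comp (hk1 : 1 ≤ |k|) (hk2 : |k| ≤ (n:ℤ)+1) (hu : IsSignedPerm n u) :
    invB (n+1) (u * rk ((n:ℤ)+1) k)
      = invB n u + (if k < 0 then ((n:ℤ)-k).toNat else ((n:ℤ)+1-k).toNat) := by
  unfold invB
  simp only [Nat.cast_add, Nat.cast_one]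
  rw [A_comp hk1 hk2 hu, B_comp hk1 hk2 hu, NB_comp hk1 hk2 hu]
  rcases abs_cases k with ⟨ha, ha'⟩ | ⟨ha, ha'⟩ <;> split_ifs <;> omega

lemma invB_decomp_w {w : Equiv.Perm ℤ} (hw : IsSignedPerm (n+1) w) :
    invB (n+1) w = invB n (w * (rk ((n:ℤ)+1) (w⁻¹ ((n:ℤ)+1)))⁻¹)
      + (if w⁻¹ ((n:ℤ)+1) < 0 then ((n:ℤ)-w⁻¹ ((n:ℤ)+1)).toNat
          else ((n:ℤ)+1-w⁻¹ ((n:ℤ)+1)).toNat) := by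
  obtain ⟨hk1, hk2⟩ := decomp_k_ne hw
  have hu := isp_decomp hw hk1 hk2 (w.apply_symm_apply _)
  have h := invB_comp hk1 hk2 hu
  rwa [inv_mul_cancel_right] at h

lemma mB_decomp_w {w : Equiv.Perm ℤ} (hw : IsSignedPerm (n+1) w) :
    mB (n+1) w = mB n (w * (rk ((n:ℤ)+1) (w⁻¹ ((n:ℤ)+1)))⁻¹)
      + (if w⁻¹ ((n:ℤ)+1) = (n:ℤ)+1 then 0 else 1) := by
  obtain ⟨hk1, hk2⟩ := decomp_k_ne hw
  have hu := isp_decomp hw hk1 hk2 (w.apply_symm_apply _)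
  have h := mB_comp hk1 hk2 hu
  rwa [inv_mul_cancel_right] at h

end counts

lemma bset_zero : {w : Equiv.Perm ℤ | IsSignedPerm 0 w} = {1} := by
  ext w
  simp only [Set.mem_setOf_eq, Set.mem_singleton_iff]
  constructor
  · intro hw
    apply Equiv.ext
    intro x
    rcases eq_or_ne x 0 with rfl | h
    · rw [isp_zero hw]; rfl
    · rw [hw.2 x (by simpa using abs_pos.2 h)]; rfl
  · rintro rfl
    exact ⟨fun x => by simp, fun x _ => by simp⟩

lemma bset_finite (n : ℕ) : {w : Equiv.Perm ℤ | IsSignedPerm n w}.Finite := by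
  induction n with
  | zero => rw [bset_zero]; exact Set.finite_singleton 1
  | succ n ih =>
    apply Set.Finite.subset (Set.Finite.image
      (fun p : ℤ × Equiv.Perm ℤ => p.2 * rk ((n:ℤ)+1) p.1)
      (Set.Finite.prod (Set.finite_Icc (-(n:ℤ)-1) ((n:ℤ)+1)) ih))
    intro w hw
    obtain ⟨hk1, hk2⟩ := decomp_k_ne hw
    refine ⟨(w⁻¹ ((n:ℤ)+1), w * (rk ((n:ℤ)+1) (w⁻¹ ((n:ℤ)+1)))⁻¹), ⟨?_, ?_⟩, ?_⟩
    · simp only [Set.mem_Icc]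
      rcases abs_cases (w⁻¹ ((n:ℤ)+1)) with ⟨h, h'⟩ | ⟨h, h'⟩ <;> constructor <;> omega
    · exact isp_decomp hw hk1 hk2 (w.apply_symm_apply _)
    · exact inv_mul_cancel_right _ _

lemma factor_sum {R : Type} [CommRing R] (n : ℕ) (q t : R) :
    (∑ k ∈ (Finset.Icc (-(n:ℤ)-1) ((n:ℤ)+1)).filter (fun k => k ≠ 0),
      q ^ (if k < 0 then ((n:ℤ)-k).toNat else ((n:ℤ)+1-k).toNat)
        * t ^ (if k = (n:ℤ)+1 then 0 else 1))
      = 1 + t * (∑ j ∈ Finset.range (2*(n+1)), q ^ j) - t := by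
  have step1 : (∑ k ∈ (Finset.Icc (-(n:ℤ)-1) ((n:ℤ)+1)).filter (fun k => k ≠ 0),
      q ^ (if k < 0 then ((n:ℤ)-k).toNat else ((n:ℤ)+1-k).toNat)
        * t ^ (if k = (n:ℤ)+1 then 0 else 1))
      = ∑ j ∈ Finset.range (2*(n+1)), q ^ j * (if j = 0 then 1 else t) := by
    apply Finset.sum_nbij'
      (i := fun k => if k < 0 then ((n:ℤ)-k).toNat else ((n:ℤ)+1-k).toNat)
      (j := fun j => if (j:ℤ) ≤ (n:ℤ) then (n:ℤ)+1-(j:ℤ) else (n:ℤ)-(j:ℤ))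
    · intro k hk
      simp only [Finset.mem_filter, Finset.mem_Icc] at hk
      simp only [Finset.mem_range]
      split_ifs <;> omega
    · intro j hj
      simp only [Finset.mem_range] at hj
      simp only [Finset.mem_filter, Finset.mem_Icc]
      split_ifs <;> refine ⟨⟨?_, ?_⟩, ?_⟩ <;> omega
    · intro k hk
      simp only [Finset.mem_filter, Finset.mem_Icc] at hk
      split_ifs <;> omega
    · intro j hj
      simp only [Finset.mem_range] at hj
      split_ifs <;> omega
    · intro k hk
      simp only [Finset.mem_filter, Finset.mem_Icc] at hk
      congr 1
      by_cases h : k = (n:ℤ)+1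
      · rw [if_pos h, pow_zero, if_pos (by rw [if_neg (by omega)]; omega)]
      · rw [if_neg h, pow_one, if_neg (by split_ifs <;> omega)]
  rw [step1]
  have step2 : ∀ j : ℕ, q ^ j * (if j = 0 then (1:R) else t)
      = t * q ^ j + (if j = 0 then 1 - t else 0) := by
    intro j
    split_ifs with h
    · subst h; simp
    · ring
  rw [Finset.sum_congr rfl (fun j _ => step2 j), Finset.sum_add_distrib, ← Finset.mul_sum,
    Finset.sum_ite_eq' (Finset.range (2*(n+1))) 0 (fun _ => (1:R) - t),
    if_pos (by simp)]
  ring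


/-- `∑_{w ∈ B_n} q^{inv_B w} t^{m_B w} = ∏_{i=1}^{n} (1 + t·[2i]_q − t)`. -/
theorem invB_mB_generating_function {R : Type} [CommRing R] (n : ℕ) (q t : R) :
    (∑ᶠ w ∈ {w : Equiv.Perm ℤ | IsSignedPerm n w}, q ^ invB n w * t ^ mB n w) =
      ∏ i ∈ Finset.range n,
        (1 + t * (∑ j ∈ Finset.range (2 * (i + 1)), q ^ j) - t) := by
  induction n with
  | zero =>
    rw [bset_zero, finsum_mem_singleton]
    have he : Finset.Icc (1:ℤ) ((0:ℕ):ℤ) = ∅ := Finset.Icc_eq_empty (by norm_num)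
    simp [invB, NB, mB, he]
  | succ n ih =>
    rw [← Set.Finite.coe_toFinset (bset_finite (n+1)), finsum_mem_coe_finset]
    have key : ∑ w ∈ (bset_finite (n+1)).toFinset, q ^ invB (n+1) w * t ^ mB (n+1) w
        = ∑ p ∈ ((Finset.Icc (-(n:ℤ)-1) ((n:ℤ)+1)).filter (fun k => k ≠ 0))
              ×ˢ (bset_finite n).toFinset,
            (q ^ (if p.1 < 0 then ((n:ℤ)-p.1).toNat else ((n:ℤ)+1-p.1).toNat)
              * t ^ (if p.1 = (n:ℤ)+1 then 0 else 1)) * (q ^ invB n p.2 * t ^ mB n p.2) := by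
      apply Finset.sum_nbij'
        (i := fun w => (w⁻¹ ((n:ℤ)+1), w * (rk ((n:ℤ)+1) (w⁻¹ ((n:ℤ)+1)))⁻¹))
        (j := fun p => p.2 * rk ((n:ℤ)+1) p.1)
      · intro w hw
        rw [Set.Finite.mem_toFinset] at hw
        obtain ⟨hk1, hk2⟩ := decomp_k_ne hw
        simp only [Finset.mem_product, Finset.mem_filter, Finset.mem_Icc,
          Set.Finite.mem_toFinset]
        refine ⟨⟨⟨?_, ?_⟩, ?_⟩, ?_⟩
        · rcases abs_cases (w⁻¹ ((n:ℤ)+1)) with ⟨h, h'⟩ | ⟨h, h'⟩ <;> omega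
        · rcases abs_cases (w⁻¹ ((n:ℤ)+1)) with ⟨h, h'⟩ | ⟨h, h'⟩ <;> omega
        · rcases abs_cases (w⁻¹ ((n:ℤ)+1)) with ⟨h, h'⟩ | ⟨h, h'⟩ <;> omega
        · exact isp_decomp hw hk1 hk2 (w.apply_symm_apply _)
      · intro p hp
        simp only [Finset.mem_product, Finset.mem_filter, Finset.mem_Icc,
          Set.Finite.mem_toFinset] at hp
        rw [Set.Finite.mem_toFinset]
        have hk1 : 1 ≤ |p.1| := by
          rcases abs_cases p.1 with ⟨h, h'⟩ | ⟨h, h'⟩ <;> omega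
        have hk2 : |p.1| ≤ (n:ℤ)+1 := by
          rcases abs_cases p.1 with ⟨h, h'⟩ | ⟨h, h'⟩ <;> omega
        exact isp_comp hk1 hk2 hp.2
      · intro w hw
        exact inv_mul_cancel_right _ _
      · intro p hp
        simp only [Finset.mem_product, Finset.mem_filter, Finset.mem_Icc,
          Set.Finite.mem_toFinset] at hp
        have hk1 : 1 ≤ |p.1| := by
          rcases abs_cases p.1 with ⟨h, h'⟩ | ⟨h, h'⟩ <;> omega
        have hk2 : |p.1| ≤ (n:ℤ)+1 := by
          rcases abs_cases p.1 with ⟨h, h'⟩ | ⟨h, h'⟩ <;> omega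
        have h1 : (p.2 * rk ((n:ℤ)+1) p.1)⁻¹ ((n:ℤ)+1) = p.1 := comp_inv_top hk1 hk2 hp.2
        rw [h1, mul_inv_cancel_right]
      · intro w hw
        rw [Set.Finite.mem_toFinset] at hw
        rw [invB_decomp_w hw, mB_decomp_w hw, pow_add, pow_add]
        ring
    rw [key, Finset.sum_product]
    have hinner : ∀ x : ℤ, ∑ y ∈ (bset_finite n).toFinset,
        (q ^ (if x < 0 then ((n:ℤ)-x).toNat else ((n:ℤ)+1-x).toNat)
          * t ^ (if x = (n:ℤ)+1 then 0 else 1)) * (q ^ invB n y * t ^ mB n y)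
        = (q ^ (if x < 0 then ((n:ℤ)-x).toNat else ((n:ℤ)+1-x).toNat)
          * t ^ (if x = (n:ℤ)+1 then 0 else 1))
          * ∑ y ∈ (bset_finite n).toFinset, q ^ invB n y * t ^ mB n y := by
      intro x
      rw [Finset.mul_sum]
    simp only [hinner]
    rw [← Finset.sum_mul]
    have ihs : ∑ u ∈ (bset_finite n).toFinset, q ^ invB n u * t ^ mB n u
        = ∏ i ∈ Finset.range n, (1 + t * (∑ j ∈ Finset.range (2 * (i + 1)), q ^ j) - t) := by
      rw [← finsum_mem_coe_finset, Set.Finite.coe_toFinset]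
      exact ih
    rw [ihs, factor_sum, Finset.prod_range_succ]
    ring
end
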